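/- Let A be a real random variable with zero mean and unit variance, and let B be a real random variable independent of A with pdf f_B that is continuously differentiable on (−δ,δ) for some δ > 0. Let M := sup_{t∈(−δ,δ)} max{|f_B(t)|, |f_B′(t)|} and assume M < ∞. Then for every positive integer n, |P[B ≥ A/√n] − P[B ≥ 0]| ≤ (1/n)·(2/δ² + M/δ + M/2). -/

import Mathlib

open MeasureTheory ProbabilityTheory Set

lemma abs_setintegral_le {X : Type*} [MeasurableSpace X] (μ : Measure X) (s : Set X)
    (g : X → ℝ) : |∫ x in s, g x ∂μ| ≤ ∫ x in s, |g x| ∂μ := by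
  simpa [Real.norm_eq_abs] using norm_integral_le_integral_norm (μ := μ.restrict s) g

lemma aux_key (f : ℝ → ℝ) (δ M : ℝ) (hδ : 0 < δ)
    (hf : ContDiffOn ℝ 1 f (Ioo (-δ) δ))
    (hM : ∀ t ∈ Ioo (-δ) δ, max |f t| |deriv f t| ≤ M)
    (μB : Measure ℝ) [IsFiniteMeasure μB]
    (hpdf : μB = volume.withDensity fun x => ENNReal.ofReal (f x)) :
    ∀ x ∈ Ioo (-δ) δ,
      |(μB (Ici x)).toReal - (μB (Ici 0)).toReal + max (f 0) 0 * x| ≤ M * x ^ 2 / 2 := by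
  set h : ℝ → ℝ := fun t => max (f t) 0 with hh_def
  set c : ℝ := max (f 0) 0 with hc_def
  have hcont : ContinuousOn h (Ioo (-δ) δ) :=
    (hf.continuousOn).sup continuousOn_const
  have hflip : ∀ u ∈ Ioo (-δ) δ, ∀ v ∈ Ioo (-δ) δ, |f u - f v| ≤ M * |u - v| := by
    intro u hu v hv
    have hdiff : ∀ y ∈ Ioo (-δ) δ, DifferentiableAt ℝ f y := fun y hy =>
      (hf.differentiableOn (by norm_num)).differentiableAt (isOpen_Ioo.mem_nhds hy)
    have bound : ∀ y ∈ Ioo (-δ) δ, ‖deriv f y‖ ≤ M := fun y hy =>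
      (le_max_right _ _).trans (hM y hy)
    exact (convex_Ioo _ _).norm_image_sub_le_of_norm_deriv_le hdiff bound hv hu
  have hhlip : ∀ u ∈ Ioo (-δ) δ, ∀ v ∈ Ioo (-δ) δ, |h u - h v| ≤ M * |u - v| :=
    fun u hu v hv => (abs_max_sub_max_le_abs _ _ _).trans (hflip u hu v hv)
  have h0mem : (0:ℝ) ∈ Ioo (-δ) δ := ⟨by linarith, hδ⟩
  have hbddh : ∀ t ∈ Ioo (-δ) δ, |h t| ≤ M := by
    intro t ht
    have : |h t| ≤ |f t| := by
      rcases le_total 0 (f t) with h0 | h0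
      · rw [hh_def]; simp only [max_eq_left h0]; exact le_rfl
      · rw [hh_def]; simp only [max_eq_right h0]; simpa using abs_nonneg (f t)
    exact this.trans ((le_max_left _ _).trans (hM t ht))
  -- mass of small intervals
  have mass : ∀ u v : ℝ, -δ < u → v < δ → u ≤ v →
      (μB (Ico u v)).toReal = ∫ t in Ico u v, h t := by
    intro u v hu hv huv
    have hsub : Ico u v ⊆ Ioo (-δ) δ := fun t ht => ⟨lt_of_lt_of_le hu ht.1, lt_trans ht.2 hv⟩
    have hmeas : AEMeasurable h (volume.restrict (Ico u v)) :=
      (hcont.mono hsub).aemeasurable measurableSet_Ico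
    have hofreal : ∀ t, ENNReal.ofReal (f t) = ENNReal.ofReal (h t) := by
      intro t
      rcases le_total 0 (f t) with h0 | h0
      · rw [hh_def]; simp [max_eq_left h0]
      · rw [hh_def]; simp [max_eq_right h0, ENNReal.ofReal_eq_zero.mpr h0]
    have hint : IntegrableOn h (Ico u v) := by
      refine Integrable.mono' (integrable_const M) hmeas.aestronglyMeasurable ?_
      exact (ae_restrict_iff' measurableSet_Ico).mpr (ae_of_all _ fun t ht =>
        (by simpa using hbddh t (hsub ht)))
    rw [hpdf, withDensity_apply _ measurableSet_Ico]
    simp_rw [hofreal]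
    rw [← ofReal_integral_eq_lintegral_ofReal hint
      ((ae_restrict_iff' measurableSet_Ico).mpr (ae_of_all _ fun t _ => le_max_right _ _))]
    exact ENNReal.toReal_ofReal (integral_nonneg fun t => le_max_right _ _)
  intro x hx
  have hMnn : 0 ≤ M := (abs_nonneg _).trans ((le_max_left _ _).trans (hM 0 h0mem))
  rcases le_total 0 x with hx0 | hx0
  · -- x ≥ 0
    have hsub : Ico 0 x ⊆ Ioo (-δ) δ := fun t ht => ⟨by linarith [ht.1], lt_trans ht.2 hx.2⟩
    have hsplit : (μB (Ici 0)).toReal = (μB (Ico 0 x)).toReal + (μB (Ici x)).toReal := by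
      rw [← ENNReal.toReal_add (measure_ne_top _ _) (measure_ne_top _ _),
        ← measure_union (Set.disjoint_left.mpr fun a (ha : a ∈ Ico (0:ℝ) x) (hb : a ∈ Ici x) => absurd hb (not_le.mpr ha.2)) measurableSet_Ici,
        Ico_union_Ici_eq_Ici hx0]
    have hmass := mass 0 x (by linarith) hx.2 hx0
    have hint : IntegrableOn h (Ico 0 x) := by
      refine Integrable.mono' (integrable_const M)
        (((hcont.mono hsub).aemeasurable measurableSet_Ico).aestronglyMeasurable) ?_
      exact (ae_restrict_iff' measurableSet_Ico).mpr (ae_of_all _ fun t ht =>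
        (by simpa using hbddh t (hsub ht)))
    have hconst : ∫ _ in Ico 0 x, c = c * x := by
      rw [setIntegral_const, Real.volume_real_Ico_of_le hx0, smul_eq_mul]
      ring
    have e1 : (μB (Ici x)).toReal - (μB (Ici 0)).toReal + c * x
        = ∫ t in Ico 0 x, (c - h t) := by
      rw [integral_sub (integrableOn_const (C := c) (by rw [Real.volume_Ico]; exact ENNReal.ofReal_ne_top)) hint, hconst, hsplit, ← hmass]
      ring
    rw [e1]
    have e2 : |∫ t in Ico 0 x, (c - h t)| ≤ ∫ t in Ico 0 x, M * |t| := by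
      refine (abs_setintegral_le _ _ _).trans ?_
      refine setIntegral_mono_on ?_ ?_ measurableSet_Ico ?_
      · exact (integrableOn_const (by rw [Real.volume_Ico]; exact ENNReal.ofReal_ne_top)).sub hint |>.abs
      · exact ((continuous_const.mul continuous_abs).integrableOn_Icc).mono_set
          Ico_subset_Icc_self
      · intro t ht
        have := hhlip 0 h0mem t (hsub ht)
        calc |c - h t| = |h 0 - h t| := by rw [hh_def, hc_def]
          _ ≤ M * |0 - t| := this
          _ = M * |t| := by rw [zero_sub, abs_neg]
    refine e2.trans ?_
    have e3 : ∫ t in Ico 0 x, M * |t| = M * (x^2/2) := by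
      rw [integral_const_mul]
      congr 1
      rw [setIntegral_congr_fun measurableSet_Ico (fun t ht => abs_of_nonneg ht.1),
        ← integral_Icc_eq_integral_Ico, integral_Icc_eq_integral_Ioc,
        ← intervalIntegral.integral_of_le hx0, integral_id]
      ring
    rw [e3]; ring_nf; rfl
  · -- x ≤ 0
    have hsub : Ico x 0 ⊆ Ioo (-δ) δ := fun t ht => ⟨lt_of_lt_of_le hx.1 ht.1, lt_of_lt_of_le ht.2 hδ.le⟩
    have hsplit : (μB (Ici x)).toReal = (μB (Ico x 0)).toReal + (μB (Ici 0)).toReal := by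
      rw [← ENNReal.toReal_add (measure_ne_top _ _) (measure_ne_top _ _),
        ← measure_union (Set.disjoint_left.mpr fun a (ha : a ∈ Ico x (0:ℝ)) (hb : a ∈ Ici (0:ℝ)) => absurd hb (not_le.mpr ha.2)) measurableSet_Ici,
        Ico_union_Ici_eq_Ici hx0]
    have hmass := mass x 0 hx.1 hδ hx0
    have hint : IntegrableOn h (Ico x 0) := by
      refine Integrable.mono' (integrable_const M)
        (((hcont.mono hsub).aemeasurable measurableSet_Ico).aestronglyMeasurable) ?_
      exact (ae_restrict_iff' measurableSet_Ico).mpr (ae_of_all _ fun t ht =>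
        (by simpa using hbddh t (hsub ht)))
    have hconst : ∫ _ in Ico x 0, c = -(c * x) := by
      rw [setIntegral_const, Real.volume_real_Ico_of_le hx0, smul_eq_mul]
      ring
    have e1 : (μB (Ici x)).toReal - (μB (Ici 0)).toReal + c * x
        = ∫ t in Ico x 0, (h t - c) := by
      rw [integral_sub hint (integrableOn_const (by rw [Real.volume_Ico]; exact ENNReal.ofReal_ne_top)), hconst, hsplit, ← hmass]
      ring
    rw [e1]
    have e2 : |∫ t in Ico x 0, (h t - c)| ≤ ∫ t in Ico x 0, M * |t| := by
      refine (abs_setintegral_le _ _ _).trans ?_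
      refine setIntegral_mono_on ?_ ?_ measurableSet_Ico ?_
      · exact (hint.sub (integrableOn_const (by rw [Real.volume_Ico]; exact ENNReal.ofReal_ne_top))).abs
      · exact ((continuous_const.mul continuous_abs).integrableOn_Icc).mono_set
          Ico_subset_Icc_self
      · intro t ht
        have := hhlip t (hsub ht) 0 h0mem
        calc |h t - c| = |h t - h 0| := by rw [hh_def, hc_def]
          _ ≤ M * |t - 0| := this
          _ = M * |t| := by rw [sub_zero]
    refine e2.trans ?_
    have e3 : ∫ t in Ico x 0, M * |t| = M * (x^2/2) := by
      rw [integral_const_mul]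
      congr 1
      rw [setIntegral_congr_fun measurableSet_Ico (fun t ht => abs_of_nonpos ht.2.le),
        ← integral_Icc_eq_integral_Ico, integral_Icc_eq_integral_Ioc,
        ← intervalIntegral.integral_of_le hx0, intervalIntegral.integral_neg, integral_id]
      ring
    rw [e3]; ring_nf; rfl

/-- Speed of convergence of `P[B ≥ A/√n]` to `P[B ≥ 0]`: if `A` has zero mean and unit
variance, `B` is independent of `A` with pdf `f` that is continuously differentiable
on `(−δ,δ)` and bounded there, together with its derivative, by `M`, then
`|P[B ≥ A/√n] − P[B ≥ 0]| ≤ (1/n)(2/δ² + M/δ + M/2)`. -/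
theorem abs_prob_ge_div_sqrt_sub_prob_ge_zero_le
    {Ω : Type*} [MeasureSpace Ω] [IsProbabilityMeasure (ℙ : Measure Ω)]
    (A B : Ω → ℝ) (hmA : Measurable A) (hmB : Measurable B)
    (hindep : ProbabilityTheory.IndepFun A B ℙ)
    (hmean : ∫ ω, A ω ∂ℙ = 0) (hvar : ∫ ω, (A ω) ^ 2 ∂ℙ = 1)
    (f : ℝ → ℝ)
    (hpdf : Measure.map B ℙ = volume.withDensity fun x => ENNReal.ofReal (f x))
    (δ : ℝ) (hδ : 0 < δ) (hf : ContDiffOn ℝ 1 f (Ioo (-δ) δ))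
    (M : ℝ) (hM : ∀ t ∈ Ioo (-δ) δ, max |f t| |deriv f t| ≤ M) :
    ∀ n : ℕ, 0 < n →
      abs (((ℙ : Measure Ω) {ω | A ω / Real.sqrt n ≤ B ω}).toReal
          - ((ℙ : Measure Ω) {ω | 0 ≤ B ω}).toReal)
        ≤ (1 / n) * (2 / δ ^ 2 + M / δ + M / 2) := by
  intro n hn
  have hnpos : (0:ℝ) < n := by exact_mod_cast hn
  set s : ℝ := Real.sqrt n with hs_def
  have hs : 0 < s := Real.sqrt_pos.mpr hnpos
  have hs2 : s ^ 2 = n := Real.sq_sqrt hnpos.le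
  set μA : Measure ℝ := Measure.map A ℙ with hμA_def
  set μB : Measure ℝ := Measure.map B ℙ with hμB_def
  have hμAprob : IsProbabilityMeasure μA := Measure.isProbabilityMeasure_map hmA.aemeasurable
  have hμBprob : IsProbabilityMeasure μB := Measure.isProbabilityMeasure_map hmB.aemeasurable
  set G : ℝ → ℝ := fun c => (μB (Ici c)).toReal with hG_def
  have hGanti : Antitone G := fun u v huv =>
    ENNReal.toReal_mono (measure_ne_top _ _) (measure_mono (Ici_subset_Ici.mpr huv))
  have hGmeas : Measurable G := hGanti.measurable
  have hG0 : ∀ x, 0 ≤ G x := fun x => ENNReal.toReal_nonneg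
  have hG1 : ∀ x, G x ≤ 1 := fun x => by
    have h := ENNReal.toReal_mono ENNReal.one_ne_top (prob_le_one (μ := μB) (s := Ici x))
    simpa using h
  have hGdivmeas : Measurable fun a : ℝ => G (a / s) := hGmeas.comp (measurable_id.div_const s)
  have hidm : AEStronglyMeasurable (fun a : ℝ => a) (Measure.map A ℙ) :=
    Measurable.aestronglyMeasurable measurable_id
  -- step 1
  have hmapAB : Measure.map (fun ω => (A ω, B ω)) ℙ = μA.prod μB :=
    (indepFun_iff_map_prod_eq_prod_map_map hmA.aemeasurable hmB.aemeasurable).mp hindep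
  have hS2 : MeasurableSet {p : ℝ × ℝ | p.1 / s ≤ p.2} :=
    measurableSet_le (measurable_fst.div_const s) measurable_snd
  have h1 : (ℙ {ω | A ω / s ≤ B ω}).toReal = ∫ a, G (a / s) ∂μA := by
    have hset : {ω | A ω / s ≤ B ω} = (fun ω => (A ω, B ω)) ⁻¹' {p : ℝ × ℝ | p.1 / s ≤ p.2} :=
      rfl
    rw [hset, ← Measure.map_apply (hmA.prodMk hmB) hS2, hmapAB, Measure.prod_apply hS2]
    have hpre : ∀ a : ℝ, (Prod.mk a ⁻¹' {p : ℝ × ℝ | p.1 / s ≤ p.2}) = Ici (a / s) := by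
      intro a; ext b; simp [mem_Ici]
    simp_rw [hpre]
    rw [integral_eq_lintegral_of_nonneg_ae (ae_of_all _ fun a => hG0 _)
      hGdivmeas.aestronglyMeasurable]
    congr 1
    refine lintegral_congr fun a => ?_
    exact (ENNReal.ofReal_toReal (measure_ne_top _ _)).symm
  have h2 : (ℙ {ω | 0 ≤ B ω}).toReal = G 0 := by
    have hset : {ω | 0 ≤ B ω} = B ⁻¹' Ici 0 := rfl
    rw [hset, ← Measure.map_apply hmB measurableSet_Ici]
  -- integrability on μA
  have hA2int : Integrable (fun ω => A ω ^ 2) ℙ := by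
    by_contra hc
    rw [integral_undef hc] at hvar; norm_num at hvar
  have hsqm : Measurable fun a : ℝ => a ^ 2 := measurable_id.pow_const 2
  have hint2 : Integrable (fun a : ℝ => a ^ 2) μA :=
    (integrable_map_measure hsqm.aestronglyMeasurable hmA.aemeasurable).mpr hA2int
  have hEA2 : ∫ a, a ^ 2 ∂μA = 1 := by
    rw [hμA_def, integral_map hmA.aemeasurable hsqm.aestronglyMeasurable]; exact hvar
  have hint1 : Integrable (fun a : ℝ => a) μA := by
    refine Integrable.mono' ((integrable_const 1).add hint2)
      measurable_id.aestronglyMeasurable (ae_of_all _ fun a => ?_)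
    simp only [Real.norm_eq_abs, Pi.add_apply]
    nlinarith [sq_nonneg (|a| - 1), sq_abs a, abs_nonneg a]
  have hEA : ∫ a, a ∂μA = 0 := by
    rw [hμA_def, integral_map hmA.aemeasurable hidm]; exact hmean
  -- φ and S
  set φ : ℝ → ℝ := fun a => G (a / s) - G 0 with hφ_def
  have hφmeas : Measurable φ := hGdivmeas.sub measurable_const
  have hφbdd : ∀ a, |φ a| ≤ 1 := fun a => by
    rw [hφ_def, abs_le]
    constructor
    · have := hG0 (a/s); have := hG1 0; simp only; linarith
    · have := hG1 (a/s); have := hG0 0; simp only; linarith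
  have hφint : Integrable φ μA :=
    Integrable.mono' (integrable_const 1) hφmeas.aestronglyMeasurable
      (ae_of_all _ fun a => by rw [Real.norm_eq_abs]; exact hφbdd a)
  set S : Set ℝ := {a : ℝ | |a| < δ * s} with hS_def
  have hSm : MeasurableSet S := measurableSet_lt (measurable_id.abs) measurable_const
  have hδs : 0 < δ * s := mul_pos hδ hs
  set c : ℝ := max (f 0) 0 with hc_def
  have h0mem : (0:ℝ) ∈ Ioo (-δ) δ := ⟨by linarith, hδ⟩
  have hMnn : 0 ≤ M := (abs_nonneg (f 0)).trans ((le_max_left _ _).trans (hM 0 h0mem))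
  have hcM : |c| ≤ M := by
    have : |c| ≤ |f 0| := by
      rcases le_total 0 (f 0) with h0 | h0
      · rw [hc_def, max_eq_left h0]
      · rw [hc_def, max_eq_right h0, abs_zero]; exact abs_nonneg _
    exact this.trans ((le_max_left _ _).trans (hM 0 h0mem))
  have hkey := aux_key f δ M hδ hf hM μB hpdf
  have hgood : ∀ a ∈ S, |φ a + c / s * a| ≤ M / (2 * n) * a ^ 2 := by
    intro a ha
    have ha' : |a| < δ * s := ha
    have hxmem : a / s ∈ Ioo (-δ) δ := by
      rw [mem_Ioo]
      constructor
      · rw [neg_lt, ← neg_div, div_lt_iff₀ hs]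
        calc -a ≤ |a| := neg_le_abs a
          _ < δ * s := ha'
      · rw [div_lt_iff₀ hs]
        calc a ≤ |a| := le_abs_self a
          _ < δ * s := ha'
    have hk := hkey (a / s) hxmem
    have e1 : φ a + c / s * a = (μB (Ici (a/s))).toReal - (μB (Ici 0)).toReal + c * (a / s) := by
      rw [hφ_def]; simp only; rw [hG_def]; ring
    have e2 : M * (a / s) ^ 2 / 2 = M / (2 * n) * a ^ 2 := by
      rw [div_pow, hs2]; ring
    rw [e1, ← e2]
    exact hk
  -- decomposition
  have hT1 : |∫ a in Sᶜ, φ a ∂μA| ≤ 1 / (δ ^ 2 * n) := by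
    refine (abs_setintegral_le _ _ _).trans ?_
    have hψint : Integrable (fun a : ℝ => 1 / (δ * s) ^ 2 * a ^ 2) μA := hint2.const_mul _
    have step1 : ∫ a in Sᶜ, |φ a| ∂μA ≤ ∫ a in Sᶜ, 1 / (δ * s) ^ 2 * a ^ 2 ∂μA := by
      refine setIntegral_mono_on hφint.abs.integrableOn hψint.integrableOn hSm.compl ?_
      intro a ha
      have ha' : δ * s ≤ |a| := not_lt.mp ha
      have hsq : (δ * s) ^ 2 ≤ a ^ 2 := by
        rw [← sq_abs a]; exact pow_le_pow_left₀ hδs.le ha' 2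
      calc |φ a| ≤ 1 := hφbdd a
        _ ≤ 1 / (δ * s) ^ 2 * a ^ 2 := by
            rw [div_mul_eq_mul_div, one_mul, le_div_iff₀ (by positivity), one_mul]
            exact hsq
    refine step1.trans ?_
    have step2 : ∫ a in Sᶜ, 1 / (δ * s) ^ 2 * a ^ 2 ∂μA ≤ ∫ a, 1 / (δ * s) ^ 2 * a ^ 2 ∂μA :=
      setIntegral_le_integral hψint (ae_of_all _ fun a => by positivity)
    refine step2.trans ?_
    rw [integral_const_mul, hEA2, mul_one, mul_pow, hs2]
  have hSa : ∫ a in S, a ∂μA = - ∫ a in Sᶜ, a ∂μA := by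
    have h := integral_add_compl hSm hint1
    rw [hEA] at h
    linarith
  have hT3 : |∫ a in Sᶜ, a ∂μA| ≤ 1 / (δ * s) := by
    refine (abs_setintegral_le _ _ _).trans ?_
    have hψint : Integrable (fun a : ℝ => 1 / (δ * s) * a ^ 2) μA := hint2.const_mul _
    have step1 : ∫ a in Sᶜ, |a| ∂μA ≤ ∫ a in Sᶜ, 1 / (δ * s) * a ^ 2 ∂μA := by
      refine setIntegral_mono_on hint1.abs.integrableOn hψint.integrableOn hSm.compl ?_
      intro a ha
      have ha' : δ * s ≤ |a| := not_lt.mp ha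
      rw [div_mul_eq_mul_div, one_mul, le_div_iff₀ hδs, ← sq_abs a]
      nlinarith [abs_nonneg a]
    refine step1.trans ?_
    have step2 : ∫ a in Sᶜ, 1 / (δ * s) * a ^ 2 ∂μA ≤ ∫ a, 1 / (δ * s) * a ^ 2 ∂μA :=
      setIntegral_le_integral hψint (ae_of_all _ fun a => by positivity)
    refine step2.trans ?_
    rw [integral_const_mul, hEA2, mul_one]
  have hT2 : |∫ a in S, (φ a + c / s * a) ∂μA| ≤ M / (2 * n) := by
    refine (abs_setintegral_le _ _ _).trans ?_
    have hintφc : Integrable (fun a => φ a + c / s * a) μA := hφint.add (hint1.const_mul _)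
    have hψint : Integrable (fun a : ℝ => M / (2 * n) * a ^ 2) μA := hint2.const_mul _
    have step1 : ∫ a in S, |φ a + c / s * a| ∂μA ≤ ∫ a in S, M / (2 * n) * a ^ 2 ∂μA :=
      setIntegral_mono_on hintφc.abs.integrableOn hψint.integrableOn hSm hgood
    refine step1.trans ?_
    have step2 : ∫ a in S, M / (2 * n) * a ^ 2 ∂μA ≤ ∫ a, M / (2 * n) * a ^ 2 ∂μA :=
      setIntegral_le_integral hψint (ae_of_all _ fun a => by positivity)
    refine step2.trans ?_
    rw [integral_const_mul, hEA2, mul_one]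
  -- assembly
  have hGsint : Integrable (fun a => G (a / s)) μA :=
    Integrable.mono' (integrable_const 1)
      hGdivmeas.aestronglyMeasurable
      (ae_of_all _ fun a => by rw [Real.norm_eq_abs, abs_of_nonneg (hG0 _)]; exact hG1 _)
  have hφeq : ∫ a, φ a ∂μA = (∫ a, G (a / s) ∂μA) - G 0 := by
    rw [hφ_def]
    rw [integral_sub hGsint (integrable_const _), integral_const]
    simp
  have hdecompS : ∫ a in S, φ a ∂μA
      = (∫ a in S, (φ a + c / s * a) ∂μA) - c / s * ∫ a in S, a ∂μA := by
    rw [integral_add hφint.integrableOn (hint1.const_mul _).integrableOn, integral_const_mul]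
    ring
  have htotal : |∫ a, φ a ∂μA| ≤ 1 / (δ ^ 2 * n) + M / (δ * n) + M / (2 * n) := by
    have hsplitI : ∫ a, φ a ∂μA = (∫ a in S, φ a ∂μA) + ∫ a in Sᶜ, φ a ∂μA :=
      (integral_add_compl hSm hφint).symm
    have hb1 : |∫ a in S, φ a ∂μA| ≤ M / (2 * n) + M / (δ * n) := by
      rw [hdecompS]
      have hb2 : |c / s * ∫ a in S, a ∂μA| ≤ M / (δ * n) := by
        rw [abs_mul, hSa, abs_neg]
        have hb3 : |c / s| ≤ M / s := by
          rw [abs_div, abs_of_pos hs]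
          exact (div_le_div_iff_of_pos_right hs).mpr hcM
        calc |c / s| * |∫ a in Sᶜ, a ∂μA| ≤ M / s * (1 / (δ * s)) :=
              mul_le_mul hb3 hT3 (abs_nonneg _) (by positivity)
          _ = M / (δ * n) := by
              rw [div_mul_div_comm, mul_one, ← hs2]
              congr 1
              ring
      exact (abs_sub _ _).trans (add_le_add hT2 hb2)
    calc |∫ a, φ a ∂μA| ≤ |∫ a in S, φ a ∂μA| + |∫ a in Sᶜ, φ a ∂μA| := by
          rw [hsplitI]; exact abs_add_le _ _
      _ ≤ (M / (2 * n) + M / (δ * n)) + 1 / (δ ^ 2 * n) := add_le_add hb1 hT1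
      _ = 1 / (δ ^ 2 * n) + M / (δ * n) + M / (2 * n) := by ring
  rw [h1, h2, ← hφeq]
  refine htotal.trans ?_
  have harith : (1 / (n:ℝ)) * (2 / δ ^ 2 + M / δ + M / 2)
      - (1 / (δ ^ 2 * n) + M / (δ * n) + M / (2 * n)) = 1 / (δ ^ 2 * n) := by
    field_simp
    ring
  have hpos : (0:ℝ) ≤ 1 / (δ ^ 2 * n) := by positivity
  linarith
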